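/- A linear operator φ on R^n preserves vector majorization if and only if it preserves majorization restricted to probability distributions. -/

import Mathlib

open Matrix

/-- `P` is a permutation matrix. -/
def IsPermMatrix {n : ℕ} (P : Matrix (Fin n) (Fin n) ℝ) : Prop :=
  ∃ σ : Equiv.Perm (Fin n), P = σ.permMatrix ℝ

/-- Vector majorization: `a = D b` for some doubly stochastic `D`. -/
def VecMaj {n : ℕ} (a b : Fin n → ℝ) : Prop :=
  ∃ D ∈ doublyStochastic ℝ (Fin n), a = D.mulVec b

/-- Strong majorization of matrices: `A = D B` for some doubly stochastic `D`. -/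
def StrongMaj {n m : ℕ} (A B : Matrix (Fin n) (Fin m) ℝ) : Prop :=
  ∃ D ∈ doublyStochastic ℝ (Fin n), A = D * B

/-- `a` is a permutation of `b`. -/
def PermOf {n : ℕ} (a b : Fin n → ℝ) : Prop :=
  ∃ σ : Equiv.Perm (Fin n), ∀ i, a i = b (σ i)

section Aux
open Finset

private lemma two_max_eq (t : ℝ) : 2 * max t 0 = |t| + t := by
  rcases le_total t 0 with h|h
  · rw [max_eq_right h, abs_of_nonpos h]; ring
  · rw [max_eq_left h, abs_of_nonneg h]; ring

private lemma sum_posPart_le {m : ℕ} (x y : Fin m → ℝ)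
    (hsum : ∑ i, x i = ∑ i, y i)
    (habs : ∀ s : ℝ, ∑ i, |x i - s| ≤ ∑ i, |y i - s|) (s : ℝ) :
    ∑ i, max (s - x i) 0 ≤ ∑ i, max (s - y i) 0 := by
  have h1 : ∀ z : Fin m → ℝ, 2 * ∑ i, max (s - z i) 0
      = (∑ i, |z i - s|) + ((m : ℝ) * s - ∑ i, z i) := by
    intro z
    rw [Finset.mul_sum]
    have : ∀ i : Fin m, 2 * max (s - z i) 0 = |z i - s| + (s - z i) := by
      intro i
      rw [two_max_eq, abs_sub_comm]
    rw [Finset.sum_congr rfl fun i _ => this i, Finset.sum_add_distrib,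
      Finset.sum_sub_distrib, Finset.sum_const, Finset.card_univ, Fintype.card_fin,
      nsmul_eq_mul]
  have h2 := h1 x
  have h3 := h1 y
  have h4 := habs s
  linarith

private lemma abel_step {m : ℕ} (v xN yN : ℕ → ℝ)
    (hv : ∀ i, i + 1 < m → v i ≤ v (i+1))
    (hk : ∀ k, 1 ≤ k → k ≤ m → ∑ i ∈ range k, yN i ≤ ∑ i ∈ range k, xN i)
    (hm : ∑ i ∈ range m, xN i = ∑ i ∈ range m, yN i) :
    ∑ i ∈ range m, v i * xN i ≤ ∑ i ∈ range m, v i * yN i := by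
  have key : ∑ i ∈ range m, v i * (xN i - yN i) ≤ 0 := by
    have h := sum_range_by_parts v (fun i => xN i - yN i) m
    simp only [smul_eq_mul] at h
    rw [h]
    have h0 : ∑ i ∈ range m, (xN i - yN i) = 0 := by
      rw [Finset.sum_sub_distrib, hm]; ring
    rw [h0, mul_zero, zero_sub, neg_nonpos]
    apply Finset.sum_nonneg
    intro i hi
    rw [Finset.mem_range] at hi
    have hi1 : i + 1 < m := by omega
    apply mul_nonneg
    · have := hv i hi1; linarith
    · rw [Finset.sum_sub_distrib, sub_nonneg]
      exact hk (i+1) (by omega) (by omega)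
  have : ∑ i ∈ range m, v i * (xN i - yN i)
      = ∑ i ∈ range m, v i * xN i - ∑ i ∈ range m, v i * yN i := by
    rw [← Finset.sum_sub_distrib]
    exact Finset.sum_congr rfl fun i _ => by ring
  linarith [this ▸ key]

private lemma sum_dif_perm {m : ℕ} (g : Fin m → ℝ) (τ : Equiv.Perm (Fin m)) :
    ∑ i ∈ range m, (if h : i < m then g (τ ⟨i, h⟩) else 0) = ∑ i, g i := by
  rw [← Fin.sum_univ_eq_sum_range (fun i => if h : i < m then g (τ ⟨i, h⟩) else 0) m]
  rw [show (fun i : Fin m => if h : (i : ℕ) < m then g (τ ⟨i, h⟩) else 0) = fun i => g (τ i) by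
    funext i; rw [dif_pos i.isLt]]
  exact Equiv.sum_comp τ g

private lemma exists_perm_dot_le {m : ℕ} (w x y : Fin m → ℝ)
    (hsum : ∑ i, x i = ∑ i, y i)
    (habs : ∀ s : ℝ, ∑ i, |x i - s| ≤ ∑ i, |y i - s|) :
    ∃ σ : Equiv.Perm (Fin m), ∑ i, w i * x i ≤ ∑ i, w i * y (σ i) := by
  classical
  set τv := Tuple.sort w with hτv
  set τx := Tuple.sort x with hτx
  set τy := Tuple.sort y with hτy
  set vN : ℕ → ℝ := fun i => if h : i < m then w (τv ⟨i, h⟩) else 0 with hvN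
  set xN : ℕ → ℝ := fun i => if h : i < m then x (τx ⟨i, h⟩) else 0 with hxN
  set yN : ℕ → ℝ := fun i => if h : i < m then y (τy ⟨i, h⟩) else 0 with hyN
  have hmx : Monotone (x ∘ τx) := Tuple.monotone_sort x
  have hmy : Monotone (y ∘ τy) := Tuple.monotone_sort y
  have hmv : Monotone (w ∘ τv) := Tuple.monotone_sort w
  -- partial sums
  have hpartial : ∀ k, 1 ≤ k → k ≤ m →
      ∑ i ∈ range k, yN i ≤ ∑ i ∈ range k, xN i := by
    intro k hk1 hkm
    have hkm1 : k - 1 < m := by omega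
    set s := yN (k-1) with hs
    have hyle : ∀ i, i < k → yN i ≤ s := by
      intro i hi
      have him : i < m := by omega
      rw [hs, hyN]
      simp only [dif_pos him, dif_pos hkm1]
      exact hmy (show (⟨i, him⟩ : Fin m) ≤ ⟨k-1, hkm1⟩ by
        rw [Fin.mk_le_mk]; omega)
    have hyge : ∀ i, k ≤ i → i < m → s ≤ yN i := by
      intro i hki him
      rw [hs, hyN]
      simp only [dif_pos him, dif_pos hkm1]
      exact hmy (show (⟨k-1, hkm1⟩ : Fin m) ≤ ⟨i, him⟩ by
        rw [Fin.mk_le_mk]; omega)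
    have hky : ∑ i ∈ range k, (s - yN i) = ∑ i, max (s - y i) 0 := by
      have e1 : ∑ i ∈ range k, (s - yN i) = ∑ i ∈ range k, max (s - yN i) 0 :=
        Finset.sum_congr rfl fun i hi => by
          rw [max_eq_left (by linarith [hyle i (Finset.mem_range.1 hi)])]
      have e2 : ∑ i ∈ range k, max (s - yN i) 0 = ∑ i ∈ range m, max (s - yN i) 0 :=
        Finset.sum_subset (Finset.range_subset_range.2 hkm) (fun i hi hni => by
          rw [Finset.mem_range] at hi hni
          rw [max_eq_right (by linarith [hyge i (by omega) hi])])
      have e3 : ∑ i ∈ range m, max (s - yN i) 0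
          = ∑ i ∈ range m, (if h : i < m then max (s - y (τy ⟨i, h⟩)) 0 else 0) :=
        Finset.sum_congr rfl fun i hi => by
          rw [Finset.mem_range] at hi
          rw [hyN]; simp only [dif_pos hi]
      rw [e1, e2, e3, sum_dif_perm (fun j => max (s - y j) 0) τy]
    have hkx : ∑ i ∈ range k, (s - xN i) ≤ ∑ i, max (s - x i) 0 := by
      have e1 : ∑ i ∈ range k, (s - xN i) ≤ ∑ i ∈ range k, max (s - xN i) 0 :=
        Finset.sum_le_sum fun i _ => le_max_left _ _
      have e2 : ∑ i ∈ range k, max (s - xN i) 0 ≤ ∑ i ∈ range m, max (s - xN i) 0 :=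
        Finset.sum_le_sum_of_subset_of_nonneg (Finset.range_subset_range.2 hkm)
          (fun i _ _ => le_max_right _ _)
      have e3 : ∑ i ∈ range m, max (s - xN i) 0
          = ∑ i ∈ range m, (if h : i < m then max (s - x (τx ⟨i, h⟩)) 0 else 0) :=
        Finset.sum_congr rfl fun i hi => by
          rw [Finset.mem_range] at hi
          rw [hxN]; simp only [dif_pos hi]
      rw [e3, sum_dif_perm (fun j => max (s - x j) 0) τx] at e2
      linarith
    have hpp := sum_posPart_le x y hsum habs s
    have ex : ∑ i ∈ range k, (s - xN i) = k * s - ∑ i ∈ range k, xN i := by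
      rw [Finset.sum_sub_distrib, Finset.sum_const, Finset.card_range, nsmul_eq_mul]
    have ey : ∑ i ∈ range k, (s - yN i) = k * s - ∑ i ∈ range k, yN i := by
      rw [Finset.sum_sub_distrib, Finset.sum_const, Finset.card_range, nsmul_eq_mul]
    have : ∑ i ∈ range k, (s - xN i) ≤ ∑ i ∈ range k, (s - yN i) := by
      rw [hky]; linarith
    rw [ex, ey] at this; linarith
  -- total sums
  have htotx : ∑ i ∈ range m, xN i = ∑ i, x i := by
    have : ∑ i ∈ range m, xN i
        = ∑ i ∈ range m, (if h : i < m then x (τx ⟨i, h⟩) else 0) := rfl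
    rw [this, sum_dif_perm x τx]
  have htoty : ∑ i ∈ range m, yN i = ∑ i, y i := by
    have : ∑ i ∈ range m, yN i
        = ∑ i ∈ range m, (if h : i < m then y (τy ⟨i, h⟩) else 0) := rfl
    rw [this, sum_dif_perm y τy]
  -- abel
  have habel : ∑ i ∈ range m, vN i * xN i ≤ ∑ i ∈ range m, vN i * yN i := by
    apply abel_step
    · intro i hi
      have hi' : i < m := by omega
      rw [hvN]; simp only [dif_pos hi, dif_pos hi']
      exact hmv (show (⟨i, hi'⟩ : Fin m) ≤ ⟨i+1, hi⟩ by rw [Fin.mk_le_mk]; omega)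
    · exact hpartial
    · rw [htotx, htoty, hsum]
  -- convert abel to Fin sums
  have hfinx : ∑ i ∈ range m, vN i * xN i = ∑ i : Fin m, w (τv i) * x (τx i) := by
    rw [← Fin.sum_univ_eq_sum_range (fun i => vN i * xN i) m]
    exact Finset.sum_congr rfl fun i _ => by
      rw [hvN, hxN]; simp only [dif_pos i.isLt]
  have hfiny : ∑ i ∈ range m, vN i * yN i = ∑ i : Fin m, w (τv i) * y (τy i) := by
    rw [← Fin.sum_univ_eq_sum_range (fun i => vN i * yN i) m]
    exact Finset.sum_congr rfl fun i _ => by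
      rw [hvN, hyN]; simp only [dif_pos i.isLt]
  -- rearrangement
  have hrearr : ∑ i, w i * x i ≤ ∑ i : Fin m, w (τv i) * x (τx i) := by
    have hA : ∑ i, w i * x i = ∑ i, w (τv i) * x (τv i) :=
      (Equiv.sum_comp τv (fun i => w i * x i)).symm
    have hmono : Monovary (w ∘ τv) (x ∘ τx) := hmv.monovary hmx
    have hB := hmono.sum_mul_comp_perm_le_sum_mul (σ := τv.trans τx.symm)
    simp only [Function.comp_apply, Equiv.trans_apply, Equiv.apply_symm_apply] at hB
    rw [hA]; exact hB
  -- final permutation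
  refine ⟨τv.symm.trans τy, ?_⟩
  have hD : ∑ i : Fin m, w (τv i) * y (τy i)
      = ∑ i, w i * y ((τv.symm.trans τy) i) := by
    have := Equiv.sum_comp τv (fun i => w i * y (τy (τv.symm i)))
    simp only [Equiv.symm_apply_apply] at this
    exact this.trans (Finset.sum_congr rfl fun i _ => by rw [Equiv.trans_apply])
  calc ∑ i, w i * x i ≤ ∑ i : Fin m, w (τv i) * x (τx i) := hrearr
    _ ≤ ∑ i : Fin m, w (τv i) * y (τy i) := by rw [← hfinx, ← hfiny]; exact habel
    _ = ∑ i, w i * y ((τv.symm.trans τy) i) := hD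

private lemma permMatrix_mulVec {m : ℕ} (σ : Equiv.Perm (Fin m)) (y : Fin m → ℝ) :
    (σ.permMatrix ℝ).mulVec y = y ∘ σ := by
  funext i
  simp [Equiv.Perm.permMatrix, mulVec, dotProduct, PEquiv.toMatrix_apply,
    Equiv.toPEquiv_apply]

private theorem core_maj {m : ℕ} (x y : Fin m → ℝ)
    (hsum : ∑ i, x i = ∑ i, y i)
    (habs : ∀ s : ℝ, ∑ i, |x i - s| ≤ ∑ i, |y i - s|) :
    ∃ D ∈ doublyStochastic ℝ (Fin m), x = D.mulVec y := by
  classical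
  have hmem : x ∈ convexHull ℝ (Set.range (fun σ : Equiv.Perm (Fin m) => y ∘ σ)) := by
    by_contra hx
    obtain ⟨f, u, hfu, hux⟩ := geometric_hahn_banach_closed_point
      (convex_convexHull ℝ _) ((Set.finite_range _).isClosed_convexHull ℝ) hx
    set w : Fin m → ℝ := fun i => f (Pi.single i 1) with hw
    have hf : ∀ z : Fin m → ℝ, f z = ∑ i, w i * z i := by
      intro z
      have hz : z = ∑ i, Pi.single i (z i) := (Finset.univ_sum_single z).symm
      conv_lhs => rw [hz]
      rw [map_sum]
      refine Finset.sum_congr rfl fun i _ => ?_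
      have hsingle : Pi.single i (z i) = z i • (Pi.single i (1:ℝ) : Fin m → ℝ) := by
        rw [← Pi.single_smul, smul_eq_mul, mul_one]
      rw [hsingle, _root_.map_smul, smul_eq_mul, hw, mul_comm]
    obtain ⟨σ, hσ⟩ := exists_perm_dot_le w x y hsum habs
    have h1 : f (y ∘ σ) < u :=
      hfu _ (subset_convexHull ℝ _ (Set.mem_range_self σ))
    have h2 : f x ≤ f (y ∘ σ) := by
      rw [hf, hf]
      exact hσ.trans (le_of_eq (Finset.sum_congr rfl fun i _ => rfl))
    linarith
  -- convert to doubly stochastic matrix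
  set T : Matrix (Fin m) (Fin m) ℝ →ₗ[ℝ] (Fin m → ℝ) :=
    { toFun := fun M => M.mulVec y
      map_add' := fun M N => add_mulVec M N y
      map_smul' := fun r M => smul_mulVec r M y } with hT
  have himg : Set.range (fun σ : Equiv.Perm (Fin m) => y ∘ σ)
      = T '' {M | ∃ σ : Equiv.Perm (Fin m), σ.permMatrix ℝ = M} := by
    ext z
    constructor
    · rintro ⟨σ, rfl⟩
      exact ⟨σ.permMatrix ℝ, ⟨σ, rfl⟩, permMatrix_mulVec σ y⟩
    · rintro ⟨M, ⟨σ, rfl⟩, rfl⟩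
      exact ⟨σ, (permMatrix_mulVec σ y).symm⟩
  rw [himg, ← LinearMap.image_convexHull, ← doublyStochastic_eq_convexHull_permMatrix]
    at hmem
  obtain ⟨D, hD, hDx⟩ := hmem
  exact ⟨D, hD, hDx.symm⟩

private lemma level_block {n : ℕ} (X Y c : Fin n → ℝ) (ρ : ℝ)
    (hsum : ∑ i ∈ univ.filter (fun i => c i = ρ), X i
          = ∑ i ∈ univ.filter (fun i => c i = ρ), Y i)
    (habs : ∀ s : ℝ, ∑ i ∈ univ.filter (fun i => c i = ρ), |X i - s|
          ≤ ∑ i ∈ univ.filter (fun i => c i = ρ), |Y i - s|) :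
    ∃ E : Matrix (Fin n) (Fin n) ℝ,
      (∀ i j, 0 ≤ E i j) ∧
      (∀ i, c i = ρ → ∑ j ∈ univ.filter (fun j => c j = ρ), E i j = 1) ∧
      (∀ j, c j = ρ → ∑ i ∈ univ.filter (fun i => c i = ρ), E i j = 1) ∧
      (∀ i, c i = ρ → ∑ j ∈ univ.filter (fun j => c j = ρ), E i j * Y j = X i) := by
  classical
  set L : Finset (Fin n) := univ.filter (fun i => c i = ρ) with hL
  set m := L.card with hm
  set e : Fin m ≃ {i // i ∈ L} := L.equivFin.symm with he
  set x : Fin m → ℝ := fun k => X (e k) with hx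
  set y : Fin m → ℝ := fun k => Y (e k) with hy
  have hsum' : ∀ Z : Fin n → ℝ, ∑ k : Fin m, Z (e k) = ∑ i ∈ L, Z i := by
    intro Z
    rw [← Finset.sum_attach L Z]
    exact Equiv.sum_comp e (fun i : {i // i ∈ L} => Z i)
  obtain ⟨D, hD, hDxy⟩ := core_maj x y (by rw [hx, hy]; rw [hsum' X, hsum' Y]; exact hsum)
    (fun s => by
      rw [hx, hy]
      calc ∑ k : Fin m, |X (e k) - s| = ∑ i ∈ L, |X i - s| := hsum' (fun i => |X i - s|)
        _ ≤ ∑ i ∈ L, |Y i - s| := habs s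
        _ = ∑ k : Fin m, |Y (e k) - s| := (hsum' (fun i => |Y i - s|)).symm)
  have hcoe : ∀ k : Fin m, (↑(e k) : Fin n) ∈ L := fun k => (e k).2
  have hsymm : ∀ (k : Fin m) (h : (↑(e k) : Fin n) ∈ L), e.symm ⟨↑(e k), h⟩ = k := by
    intro k h
    rw [Subtype.coe_eta, Equiv.symm_apply_apply]
  set E : Matrix (Fin n) (Fin n) ℝ := fun i j =>
    if h : i ∈ L ∧ j ∈ L then D (e.symm ⟨i, h.1⟩) (e.symm ⟨j, h.2⟩) else 0 with hE
  have hEval : ∀ (i : Fin n) (hiL : i ∈ L) (k : Fin m),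
      E i ↑(e k) = D (e.symm ⟨i, hiL⟩) k := by
    intro i hiL k
    rw [hE]
    dsimp only
    rw [dif_pos ⟨hiL, hcoe k⟩, hsymm k (hcoe k)]
  have hEvalL : ∀ (j : Fin n) (hjL : j ∈ L) (k : Fin m),
      E ↑(e k) j = D k (e.symm ⟨j, hjL⟩) := by
    intro j hjL k
    rw [hE]
    dsimp only
    rw [dif_pos ⟨hcoe k, hjL⟩, hsymm k (hcoe k)]
  have hmem : ∀ i : Fin n, c i = ρ → i ∈ L := by
    intro i hi; rw [hL, Finset.mem_filter]; exact ⟨Finset.mem_univ i, hi⟩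
  refine ⟨E, ?_, ?_, ?_, ?_⟩
  · intro i j
    rw [hE]
    dsimp only
    by_cases h : i ∈ L ∧ j ∈ L
    · rw [dif_pos h]; exact nonneg_of_mem_doublyStochastic hD
    · rw [dif_neg h]
  · intro i hi
    have hiL := hmem i hi
    rw [← hsum' (fun j => E i j)]
    calc ∑ k : Fin m, E i ↑(e k) = ∑ k : Fin m, D (e.symm ⟨i, hiL⟩) k :=
          Finset.sum_congr rfl fun k _ => hEval i hiL k
      _ = 1 := sum_row_of_mem_doublyStochastic hD _
  · intro j hj
    have hjL := hmem j hj
    rw [← hsum' (fun i => E i j)]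
    calc ∑ k : Fin m, E ↑(e k) j = ∑ k : Fin m, D k (e.symm ⟨j, hjL⟩) :=
          Finset.sum_congr rfl fun k _ => hEvalL j hjL k
      _ = 1 := sum_col_of_mem_doublyStochastic hD _
  · intro i hi
    have hiL := hmem i hi
    rw [← hsum' (fun j => E i j * Y j)]
    calc ∑ k : Fin m, E i ↑(e k) * Y ↑(e k)
        = ∑ k : Fin m, D (e.symm ⟨i, hiL⟩) k * y k :=
          Finset.sum_congr rfl fun k _ => by rw [hEval i hiL k, hy]
      _ = (D.mulVec y) (e.symm ⟨i, hiL⟩) := rfl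
      _ = x (e.symm ⟨i, hiL⟩) := by rw [← hDxy]
      _ = X i := by rw [hx]; dsimp only; rw [Equiv.apply_symm_apply]

private lemma global_D {n : ℕ} (X Y c : Fin n → ℝ)
    (hlevel : ∀ ρ : ℝ, ∃ E : Matrix (Fin n) (Fin n) ℝ,
      (∀ i j, 0 ≤ E i j) ∧
      (∀ i, c i = ρ → ∑ j ∈ univ.filter (fun j => c j = ρ), E i j = 1) ∧
      (∀ j, c j = ρ → ∑ i ∈ univ.filter (fun i => c i = ρ), E i j = 1) ∧
      (∀ i, c i = ρ → ∑ j ∈ univ.filter (fun j => c j = ρ), E i j * Y j = X i)) :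
    ∃ D ∈ doublyStochastic ℝ (Fin n), X = D.mulVec Y := by
  classical
  choose E h0 hrow hcol hmul using hlevel
  refine ⟨fun i j => if c j = c i then E (c i) i j else 0, ?_, ?_⟩
  · refine mem_doublyStochastic_iff_sum.2 ?_
    refine ⟨fun i j => ?_, fun i => ?_, fun j => ?_⟩
    · by_cases h : c j = c i
      · rw [if_pos h]; exact h0 _ i j
      · rw [if_neg h]
    · rw [← Finset.sum_filter]
      exact hrow (c i) i rfl
    · have : ∀ i : Fin n, (if c j = c i then E (c i) i j else 0)
          = (if c i = c j then E (c j) i j else 0) := by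
        intro i
        by_cases h : c j = c i
        · rw [if_pos h, if_pos h.symm, h]
        · rw [if_neg h, if_neg (fun h' => h h'.symm)]
      rw [Finset.sum_congr rfl fun i _ => this i, ← Finset.sum_filter]
      exact hcol (c j) j rfl
  · funext i
    show X i = dotProduct (fun j => if c j = c i then E (c i) i j else 0) Y
    have : ∀ j : Fin n, (if c j = c i then E (c i) i j else 0) * Y j
        = (if c j = c i then E (c i) i j * Y j else 0) := by
      intro j; by_cases h : c j = c i
      · rw [if_pos h, if_pos h]
      · rw [if_neg h, if_neg h, zero_mul]
    calc X i = ∑ j ∈ univ.filter (fun j => c j = c i), E (c i) i j * Y j :=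
          (hmul (c i) i rfl).symm
      _ = ∑ j, (if c j = c i then E (c i) i j * Y j else 0) := Finset.sum_filter _ _
      _ = ∑ j, (if c j = c i then E (c i) i j else 0) * Y j :=
          (Finset.sum_congr rfl fun j _ => (this j).symm)
      _ = dotProduct (fun j => if c j = c i then E (c i) i j else 0) Y := rfl

private lemma ds_sum {n : ℕ} {E : Matrix (Fin n) (Fin n) ℝ}
    (hE : E ∈ doublyStochastic ℝ (Fin n)) (w : Fin n → ℝ) :
    ∑ i, (E.mulVec w) i = ∑ i, w i := by
  calc ∑ i, (E.mulVec w) i = ∑ i, ∑ j, E i j * w j := rfl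
    _ = ∑ j, (∑ i, E i j) * w j := by
        rw [Finset.sum_comm]
        exact Finset.sum_congr rfl fun j _ => by rw [Finset.sum_mul]
    _ = ∑ j, w j := Finset.sum_congr rfl fun j _ => by
        rw [sum_col_of_mem_doublyStochastic hE, one_mul]

private lemma ds_abs {n : ℕ} {E : Matrix (Fin n) (Fin n) ℝ}
    (hE : E ∈ doublyStochastic ℝ (Fin n)) (w : Fin n → ℝ) (u : ℝ) :
    ∑ i, |(E.mulVec w) i - u| ≤ ∑ i, |w i - u| := by
  have h1 : ∀ i, |(E.mulVec w) i - u| ≤ ∑ j, E i j * |w j - u| := by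
    intro i
    have he : (E.mulVec w) i - u = ∑ j, E i j * (w j - u) := by
      have h3 : ∑ j, E i j * (w j - u) = (∑ j, E i j * w j) - (∑ j, E i j) * u := by
        rw [Finset.sum_mul, ← Finset.sum_sub_distrib]
        exact Finset.sum_congr rfl fun j _ => by ring
      rw [h3, sum_row_of_mem_doublyStochastic hE, one_mul]; rfl
    rw [he]
    refine (Finset.abs_sum_le_sum_abs _ _).trans (le_of_eq ?_)
    exact Finset.sum_congr rfl fun j _ => by
      rw [abs_mul, abs_of_nonneg (nonneg_of_mem_doublyStochastic hE)]
  calc ∑ i, |(E.mulVec w) i - u| ≤ ∑ i, ∑ j, E i j * |w j - u| :=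
        Finset.sum_le_sum fun i _ => h1 i
    _ = ∑ j, (∑ i, E i j) * |w j - u| := by
        rw [Finset.sum_comm]
        exact Finset.sum_congr rfl fun j _ => by rw [Finset.sum_mul]
    _ = ∑ j, |w j - u| := Finset.sum_congr rfl fun j _ => by
        rw [sum_col_of_mem_doublyStochastic hE, one_mul]

private lemma tail_fact {n : ℕ} (hn : 0 < n) (φ : (Fin n → ℝ) →ₗ[ℝ] (Fin n → ℝ))
    (H : ∀ a b : Fin n → ℝ, (∀ i, 0 ≤ a i) → ∑ i, a i = 1 →
      (∀ i, 0 ≤ b i) → ∑ i, b i = 1 →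
      (∃ D ∈ doublyStochastic ℝ (Fin n), a = D.mulVec b) →
      (∃ D ∈ doublyStochastic ℝ (Fin n), φ a = D.mulVec (φ b)))
    (a b : Fin n → ℝ) (D0 : Matrix (Fin n) (Fin n) ℝ)
    (hD0 : D0 ∈ doublyStochastic ℝ (Fin n)) (hab : a = D0.mulVec b)
    (t : ℝ) (ht : 1 + ∑ i, (|a i| + |b i|) ≤ |t|) :
    ∃ E ∈ doublyStochastic ℝ (Fin n),
      (φ a + t • φ (fun _ => 1)) = E.mulVec (φ b + t • φ (fun _ => 1)) := by
  classical
  set S := ∑ i, (|a i| + |b i|) with hS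
  have hS0 : 0 ≤ S := Finset.sum_nonneg fun i _ => by positivity
  have habs_le : ∀ i, |a i| ≤ S ∧ |b i| ≤ S := by
    intro i
    constructor
    · calc |a i| ≤ |a i| + |b i| := by linarith [abs_nonneg (b i)]
        _ ≤ S := Finset.single_le_sum (f := fun i => |a i| + |b i|)
            (fun i _ => by positivity) (Finset.mem_univ i)
    · calc |b i| ≤ |a i| + |b i| := by linarith [abs_nonneg (a i)]
        _ ≤ S := Finset.single_le_sum (f := fun i => |a i| + |b i|)
            (fun i _ => by positivity) (Finset.mem_univ i)
  set s := ∑ i, (b i + t) with hs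
  -- sign analysis
  have hsgn : s ≠ 0 ∧ (∀ i, 0 ≤ (a i + t)/s) ∧ (∀ i, 0 ≤ (b i + t)/s) := by
    rcases le_or_gt 0 t with h0 | h0
    · have ht' : 1 + S ≤ t := by rwa [abs_of_nonneg h0] at ht
      have hai : ∀ i, 0 < a i + t := fun i => by
        have h1 := (habs_le i).1
        have h2 := neg_abs_le (a i)
        linarith
      have hbi : ∀ i, 0 < b i + t := fun i => by
        have h1 := (habs_le i).2
        have h2 := neg_abs_le (b i)
        linarith
      have hspos : 0 < s := by
        rw [hs]
        exact Finset.sum_pos (fun i _ => hbi i) (by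
          simp [Finset.univ_nonempty_iff]
          exact Fin.pos_iff_nonempty.mp hn)
      exact ⟨ne_of_gt hspos, fun i => div_nonneg (hai i).le hspos.le,
        fun i => div_nonneg (hbi i).le hspos.le⟩
    · have ht' : t ≤ -(1 + S) := by
        rw [abs_of_neg h0] at ht; linarith
      have hai : ∀ i, a i + t < 0 := fun i => by
        have h1 := (habs_le i).1
        have h2 := le_abs_self (a i)
        linarith
      have hbi : ∀ i, b i + t < 0 := fun i => by
        have h1 := (habs_le i).2
        have h2 := le_abs_self (b i)
        linarith
      have hsneg : s < 0 := by
        rw [hs]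
        exact Finset.sum_neg (fun i _ => hbi i) (by
          simp [Finset.univ_nonempty_iff]
          exact Fin.pos_iff_nonempty.mp hn)
      exact ⟨ne_of_lt hsneg,
        fun i => by rw [div_nonneg_iff]; exact Or.inr ⟨(hai i).le, hsneg.le⟩,
        fun i => by rw [div_nonneg_iff]; exact Or.inr ⟨(hbi i).le, hsneg.le⟩⟩
  obtain ⟨hs0, hpa, hpb⟩ := hsgn
  have hsab : ∑ i, a i = ∑ i, b i := by
    rw [hab]
    exact ds_sum hD0 b
  set p := fun i => (a i + t)/s with hp
  set q := fun i => (b i + t)/s with hq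
  have hq1 : ∑ i, q i = 1 := by
    rw [hq, ← Finset.sum_div, ← hs, div_self hs0]
  have hp1 : ∑ i, p i = 1 := by
    rw [hp, ← Finset.sum_div]
    have : ∑ i, (a i + t) = s := by
      rw [hs, Finset.sum_add_distrib, Finset.sum_add_distrib, hsab]
    rw [this, div_self hs0]
  have hpq : p = D0.mulVec q := by
    funext i
    rw [hq, hp]
    have : D0.mulVec (fun j => (b j + t)/s) i = (∑ j, D0 i j * (b j + t))/s :=
      calc D0.mulVec (fun j => (b j + t)/s) i = ∑ j, D0 i j * ((b j + t)/s) := rfl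
        _ = ∑ j, (D0 i j * (b j + t))/s :=
            Finset.sum_congr rfl fun j _ => (mul_div_assoc _ _ _).symm
        _ = (∑ j, D0 i j * (b j + t))/s := by rw [Finset.sum_div]
    rw [this]
    have h2 : ∑ j, D0 i j * (b j + t) = a i + t := by
      have : ∑ j, D0 i j * (b j + t) = (∑ j, D0 i j * b j) + (∑ j, D0 i j) * t := by
        rw [Finset.sum_mul, ← Finset.sum_add_distrib]
        exact Finset.sum_congr rfl fun j _ => by ring
      rw [this, sum_row_of_mem_doublyStochastic hD0, one_mul]
      have : ∑ j, D0 i j * b j = a i := by rw [hab]; rfl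
      rw [this]
    rw [h2]
  obtain ⟨E, hE, hpqE⟩ := H p q hpa hp1 hpb hq1 ⟨D0, hD0, hpq⟩
  refine ⟨E, hE, ?_⟩
  have hpdef : p = s⁻¹ • (a + t • (fun _ => (1:ℝ))) := by
    funext i
    simp only [hp, Pi.smul_apply, Pi.add_apply, smul_eq_mul]
    rw [div_eq_inv_mul]
    ring_nf
  have hqdef : q = s⁻¹ • (b + t • (fun _ => (1:ℝ))) := by
    funext i
    simp only [hq, Pi.smul_apply, Pi.add_apply, smul_eq_mul]
    rw [div_eq_inv_mul]
    ring_nf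
  rw [hpdef, hqdef, _root_.map_smul, map_add, _root_.map_smul, _root_.map_smul, map_add,
    _root_.map_smul] at hpqE
  rw [Matrix.mulVec_smul] at hpqE
  have := smul_right_injective (Fin n → ℝ) (inv_ne_zero hs0) hpqE
  exact this

private lemma abs_pm (v w : ℝ) (h : |v| ≤ w) : |v + w| + |v - w| = 2*w := by
  rw [abs_of_nonneg (by linarith [neg_abs_le v]), abs_of_nonpos (by linarith [le_abs_self v])]
  ring

private lemma abs_pair (v e T : ℝ) (h : |v| ≤ T * |e|) :
    |v + T*e| + |v - T*e| = 2*(T*|e|) := by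
  rcases le_or_gt 0 e with he|he
  · rw [abs_of_nonneg he] at h ⊢
    exact abs_pm v (T*e) h
  · rw [abs_of_neg he] at h ⊢
    have h1 : v + T*e = v - T*(-e) := by ring
    have h2 : v - T*e = v + T*(-e) := by ring
    rw [h1, h2, add_comm]
    exact abs_pm v (T*(-e)) h

private lemma level_abs {n : ℕ} (X Y c : Fin n → ℝ) (t0 : ℝ) (ht0 : 0 < t0)
    (htail : ∀ t : ℝ, t0 ≤ |t| → ∀ u : ℝ,
      ∑ i, |X i + t * c i - u| ≤ ∑ i, |Y i + t * c i - u|)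
    (ρ s : ℝ) :
    ∑ i ∈ univ.filter (fun i => c i = ρ), |X i - s|
      ≤ ∑ i ∈ univ.filter (fun i => c i = ρ), |Y i - s| := by
  classical
  set T : ℝ := t0 + ∑ i, (|X i - s| + |Y i - s|) / (if c i = ρ then 1 else |c i - ρ|) with hT
  have hterm : ∀ i, 0 ≤ (|X i - s| + |Y i - s|) / (if c i = ρ then 1 else |c i - ρ|) := by
    intro i
    apply div_nonneg (by positivity)
    by_cases h : c i = ρ
    · rw [if_pos h]; norm_num
    · rw [if_neg h]; positivity
  have hTt0 : t0 ≤ T := by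
    rw [hT]
    have := Finset.sum_nonneg (fun i (_ : i ∈ (univ : Finset (Fin n))) => hterm i)
    linarith
  have hTpos : 0 < T := lt_of_lt_of_le ht0 hTt0
  have hbound : ∀ i, ¬ c i = ρ → |X i - s| + |Y i - s| ≤ T * |c i - ρ| := by
    intro i h
    have hne : |c i - ρ| ≠ 0 := by
      rw [abs_ne_zero, sub_ne_zero]
      exact h
    have h1 : (|X i - s| + |Y i - s|) / |c i - ρ| ≤ T := by
      have h2 : (|X i - s| + |Y i - s|) / (if c i = ρ then 1 else |c i - ρ|)
          ≤ ∑ j, (|X j - s| + |Y j - s|) / (if c j = ρ then 1 else |c j - ρ|) :=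
        Finset.single_le_sum (fun j _ => hterm j) (Finset.mem_univ i)
      rw [if_neg h] at h2
      rw [hT]
      linarith
    calc |X i - s| + |Y i - s| = ((|X i - s| + |Y i - s|)/|c i - ρ|) * |c i - ρ| :=
          (div_mul_cancel₀ _ hne).symm
      _ ≤ T * |c i - ρ| := mul_le_mul_of_nonneg_right h1 (abs_nonneg _)
  have hplus := htail T (by rw [abs_of_pos hTpos]; exact hTt0) (s + T * ρ)
  have hminus := htail (-T) (by rw [abs_neg, abs_of_pos hTpos]; exact hTt0) (s - T * ρ)
  have eplus : ∀ Z : Fin n → ℝ, ∑ i, |Z i + T * c i - (s + T * ρ)|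
      = ∑ i, |(Z i - s) + T * (c i - ρ)| := fun Z =>
    Finset.sum_congr rfl fun i _ => by rw [show Z i + T * c i - (s + T * ρ)
      = (Z i - s) + T * (c i - ρ) by ring]
  have eminus : ∀ Z : Fin n → ℝ, ∑ i, |Z i + (-T) * c i - (s - T * ρ)|
      = ∑ i, |(Z i - s) - T * (c i - ρ)| := fun Z =>
    Finset.sum_congr rfl fun i _ => by rw [show Z i + (-T) * c i - (s - T * ρ)
      = (Z i - s) - T * (c i - ρ) by ring]
  rw [eplus X, eplus Y] at hplus
  rw [eminus X, eminus Y] at hminus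
  have hsplit : ∀ Z : Fin n → ℝ, (∀ i, ¬ c i = ρ → |Z i - s| ≤ T * |c i - ρ|) →
      (∑ i, |(Z i - s) + T * (c i - ρ)|) + (∑ i, |(Z i - s) - T * (c i - ρ)|)
      = 2 * (∑ i ∈ univ.filter (fun i => c i = ρ), |Z i - s|)
        + ∑ i ∈ univ.filter (fun i => ¬ c i = ρ), 2*(T*|c i - ρ|) := by
    intro Z hZ
    rw [← Finset.sum_add_distrib]
    rw [← Finset.sum_filter_add_sum_filter_not univ (fun i => c i = ρ)
      (fun i => |(Z i - s) + T * (c i - ρ)| + |(Z i - s) - T * (c i - ρ)|)]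
    congr 1
    · rw [Finset.mul_sum]
      refine Finset.sum_congr rfl fun i hi => ?_
      rw [Finset.mem_filter] at hi
      rw [hi.2]
      simp only [sub_self, mul_zero, add_zero, sub_zero]
      ring
    · refine Finset.sum_congr rfl fun i hi => ?_
      rw [Finset.mem_filter] at hi
      exact abs_pair (Z i - s) (c i - ρ) T (hZ i hi.2)
  have hsX := hsplit X (fun i hi => by linarith [hbound i hi, abs_nonneg (Y i - s)])
  have hsY := hsplit Y (fun i hi => by linarith [hbound i hi, abs_nonneg (X i - s)])
  have hcomb : (∑ i, |(X i - s) + T * (c i - ρ)|) + (∑ i, |(X i - s) - T * (c i - ρ)|)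
      ≤ (∑ i, |(Y i - s) + T * (c i - ρ)|) + (∑ i, |(Y i - s) - T * (c i - ρ)|) := by
    linarith
  rw [hsX, hsY] at hcomb
  linarith

private lemma level_sum {n : ℕ} (X Y : Fin n → ℝ) (L : Finset (Fin n))
    (habs : ∀ s : ℝ, ∑ i ∈ L, |X i - s| ≤ ∑ i ∈ L, |Y i - s|) :
    ∑ i ∈ L, X i = ∑ i ∈ L, Y i := by
  classical
  set M : ℝ := ∑ i, (|X i| + |Y i|) with hM
  have hXM : ∀ i : Fin n, |X i| ≤ M ∧ |Y i| ≤ M := by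
    intro i
    constructor
    · calc |X i| ≤ |X i| + |Y i| := by linarith [abs_nonneg (Y i)]
        _ ≤ M := Finset.single_le_sum (f := fun i => |X i| + |Y i|)
            (fun j _ => by positivity) (Finset.mem_univ i)
    · calc |Y i| ≤ |X i| + |Y i| := by linarith [abs_nonneg (X i)]
        _ ≤ M := Finset.single_le_sum (f := fun i => |X i| + |Y i|)
            (fun j _ => by positivity) (Finset.mem_univ i)
  have h1 := habs M
  have h2 := habs (-M)
  have e1 : ∀ Z : Fin n → ℝ, (∀ i : Fin n, |Z i| ≤ M) →
      ∑ i ∈ L, |Z i - M| = L.card * M - ∑ i ∈ L, Z i := by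
    intro Z hZ
    have : ∀ i ∈ L, |Z i - M| = M - Z i := fun i _ => by
      rw [abs_of_nonpos (by linarith [le_abs_self (Z i), hZ i])]
      ring
    rw [Finset.sum_congr rfl this, Finset.sum_sub_distrib, Finset.sum_const, nsmul_eq_mul]
  have e2 : ∀ Z : Fin n → ℝ, (∀ i : Fin n, |Z i| ≤ M) →
      ∑ i ∈ L, |Z i - (-M)| = L.card * M + ∑ i ∈ L, Z i := by
    intro Z hZ
    have : ∀ i ∈ L, |Z i - (-M)| = M + Z i := fun i _ => by
      rw [show Z i - (-M) = Z i + M by ring,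
        abs_of_nonneg (by linarith [neg_abs_le (Z i), hZ i])]
      ring
    rw [Finset.sum_congr rfl this, Finset.sum_add_distrib, Finset.sum_const, nsmul_eq_mul]
  rw [e1 X (fun i => (hXM i).1), e1 Y (fun i => (hXM i).2)] at h1
  rw [e2 X (fun i => (hXM i).1), e2 Y (fun i => (hXM i).2)] at h2
  linarith

end Aux

open Finset in
theorem stmt8 {n : ℕ} (φ : (Fin n → ℝ) →ₗ[ℝ] (Fin n → ℝ)) :
    (∀ a b : Fin n → ℝ, VecMaj a b → VecMaj (φ a) (φ b)) ↔
    (∀ a b : Fin n → ℝ, (∀ i, 0 ≤ a i) → ∑ i, a i = 1 →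
      (∀ i, 0 ≤ b i) → ∑ i, b i = 1 → VecMaj a b → VecMaj (φ a) (φ b)) := by
  constructor
  · exact fun h a b _ _ _ _ hab => h a b hab
  · intro H a b hab
    rcases Nat.eq_zero_or_pos n with hn|hn
    · subst hn
      exact ⟨1, Submonoid.one_mem _, by
        rw [Matrix.one_mulVec]; funext i; exact i.elim0⟩
    · obtain ⟨D0, hD0, hab0⟩ := hab
      set X := φ a with hX
      set Y := φ b with hY
      set c := φ (fun _ => (1:ℝ)) with hc
      set t0 : ℝ := 1 + ∑ i, (|a i| + |b i|) with ht0def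
      have ht0 : 0 < t0 := by
        rw [ht0def]
        have : 0 ≤ ∑ i, (|a i| + |b i|) := Finset.sum_nonneg fun i _ => by positivity
        linarith
      have htail : ∀ t : ℝ, t0 ≤ |t| → ∀ u : ℝ,
          ∑ i, |X i + t * c i - u| ≤ ∑ i, |Y i + t * c i - u| := by
        intro t ht u
        obtain ⟨E, hE, hXY⟩ := tail_fact hn φ H a b D0 hD0 hab0 t ht
        have h2 := ds_abs hE (Y + t • c) u
        rw [← hXY] at h2
        simpa [Pi.add_apply, Pi.smul_apply, smul_eq_mul] using h2
      have hlevel : ∀ ρ s : ℝ, ∑ i ∈ univ.filter (fun i => c i = ρ), |X i - s|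
          ≤ ∑ i ∈ univ.filter (fun i => c i = ρ), |Y i - s| :=
        fun ρ s => level_abs X Y c t0 ht0 htail ρ s
      show ∃ D ∈ doublyStochastic ℝ (Fin n), X = D.mulVec Y
      apply global_D X Y c
      intro ρ
      exact level_block X Y c ρ (level_sum X Y _ (hlevel ρ)) (hlevel ρ)
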